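/- The function f(x,y) = -2Λ(x+y) + 2Λ(y) + Λ(x) attains its maximum on the open triangle {0 < x, 0 < y, x + y < π} at (π/2, π/4), and this maximum value is 4Λ(π/4), where Λ is the Lobachevsky function. -/

import Mathlib

open Real

noncomputable def lob (θ : ℝ) : ℝ := -∫ t in (0:ℝ)..θ, Real.log |2 * Real.sin t|

noncomputable def f (x y : ℝ) : ℝ := -2 * lob (x + y) + 2 * lob y + lob x

open MeasureTheory intervalIntegral Set

noncomputable def g (t : ℝ) : ℝ := Real.log |2 * Real.sin t|

lemma meas_g : Measurable g :=
  Real.measurable_log.comp ((measurable_sin.const_mul 2).abs)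

lemma int_log01 : IntervalIntegrable Real.log volume 0 1 := by
  have hG : ∀ x ∈ Ioo (0:ℝ) 1, HasDerivAt (fun x => x - x * Real.log x) (-Real.log x) x := by
    intro x hx
    have h := (hasDerivAt_id x).sub (Real.hasDerivAt_mul_log (ne_of_gt hx.1))
    exact h.congr_deriv (by ring)
  have hcont : ContinuousOn (fun x : ℝ => x - x * Real.log x) (Icc 0 1) :=
    (continuous_id.sub Real.continuous_mul_log).continuousOn
  have hpos : ∀ x ∈ Ioo (0:ℝ) 1, 0 ≤ -Real.log x := by
    intro x hx
    simp only [neg_nonneg]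
    exact Real.log_nonpos hx.1.le hx.2.le
  have := intervalIntegral.integrableOn_deriv_of_nonneg hcont hG hpos
  have h2 : IntegrableOn (fun x => Real.log x) (Ioc (0:ℝ) 1) := by
    have h3 := this.neg
    simpa [Pi.neg_def] using h3
  exact (intervalIntegrable_iff_integrableOn_Ioc_of_le zero_le_one).2 h2

lemma pi_div_two_pos' : (0:ℝ) < π / 2 := by positivity

lemma int_logsin_half : IntervalIntegrable (fun t => Real.log |Real.sin t|) volume 0 (π/2) := by
  have hb : IntervalIntegrable (fun t => Real.log (π/2) - Real.log t) volume 0 (π/2) := by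
    apply IntervalIntegrable.sub
    · exact intervalIntegrable_const
    · refine int_log01.trans ?_
      apply intervalIntegrable_log
      intro h
      rw [Set.mem_uIcc] at h
      have hπ := pi_gt_three
      rcases h with ⟨h1,_⟩|⟨_,h2⟩ <;> linarith
  rw [intervalIntegrable_iff_integrableOn_Ioc_of_le pi_div_two_pos'.le] at hb ⊢
  have hmeas : AEStronglyMeasurable (fun t => Real.log |Real.sin t|) (volume.restrict (Ioc 0 (π/2))) :=
    (Real.measurable_log.comp measurable_sin.abs).aestronglyMeasurable
  refine MeasureTheory.Integrable.mono hb hmeas ?_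
  rw [ae_restrict_iff' measurableSet_Ioc]
  refine Filter.Eventually.of_forall (fun t ht => ?_)
  have h0 : 0 < t := ht.1
  have h2 : t ≤ π/2 := ht.2
  have hs : 0 < Real.sin t := Real.sin_pos_of_pos_of_lt_pi h0 (lt_of_le_of_lt h2 (by linarith [pi_pos]))
  have hsle : Real.sin t ≤ 1 := Real.sin_le_one t
  have hlow : 2/π * t ≤ Real.sin t := Real.mul_le_sin h0.le h2
  rw [abs_of_pos hs]
  have hlog1 : Real.log (Real.sin t) ≤ 0 := Real.log_nonpos hs.le hsle
  have hlog2 : Real.log (2/π * t) ≤ Real.log (Real.sin t) :=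
    Real.log_le_log (by positivity) hlow
  have hπ : (0:ℝ) < π := pi_pos
  have hexp : Real.log (2/π * t) = Real.log t - Real.log (π/2) := by
    rw [Real.log_mul (by positivity) (ne_of_gt h0), Real.log_div (by norm_num) (ne_of_gt hπ),
      Real.log_div (ne_of_gt hπ) (by norm_num)]
    ring
  have hub : 0 ≤ Real.log (π/2) - Real.log t + Real.log (Real.sin t) := by
    rw [hexp] at hlog2; linarith
  rw [Real.norm_eq_abs, Real.norm_eq_abs, abs_of_nonpos hlog1]
  have : Real.log t ≤ Real.log (π/2) := Real.log_le_log h0 (h2)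
  rw [abs_of_nonneg (by linarith)]
  linarith

lemma int_logsin_pi : IntervalIntegrable (fun t => Real.log |Real.sin t|) volume 0 π := by
  refine int_logsin_half.trans ?_
  have h := (int_logsin_half.comp_sub_left π).symm
  simp only [sub_zero] at h
  have heq : (fun x => Real.log |Real.sin (π - x)|) = fun x => Real.log |Real.sin x| := by
    funext x; rw [Real.sin_pi_sub]
  rw [heq] at h
  have h2 : π - π/2 = π/2 := by ring
  rwa [h2] at h

lemma sin_zero_ae : ∀ᵐ t : ℝ, Real.sin t ≠ 0 := by
  have hc : Set.Countable {t : ℝ | Real.sin t = 0} := by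
    have : {t : ℝ | Real.sin t = 0} ⊆ Set.range (fun n : ℤ => (n : ℝ) * π) := by
      intro t ht
      rw [Set.mem_setOf_eq, Real.sin_eq_zero_iff] at ht
      obtain ⟨n, hn⟩ := ht
      exact ⟨n, hn⟩
    exact Set.Countable.mono this (Set.countable_range _)
  have := hc.measure_zero (volume : MeasureTheory.Measure ℝ)
  have h2 := MeasureTheory.measure_eq_zero_iff_ae_notMem.mp this
  filter_upwards [h2] with t ht
  simpa using ht

lemma g_ae : g =ᵐ[volume] fun t => Real.log 2 + Real.log |Real.sin t| := by
  filter_upwards [sin_zero_ae] with t ht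
  unfold g
  rw [abs_mul, Real.log_mul (by norm_num) (abs_ne_zero.mpr ht)]
  norm_num

lemma int_g_pi : IntervalIntegrable g volume 0 π := by
  have h : IntervalIntegrable (fun t => Real.log 2 + Real.log |Real.sin t|) volume 0 π :=
    intervalIntegrable_const.add int_logsin_pi
  rw [intervalIntegrable_iff] at h ⊢
  exact h.congr (MeasureTheory.ae_restrict_of_ae g_ae.symm)

lemma int_g_sub {a b : ℝ} (h : Set.uIcc a b ⊆ Set.uIcc 0 π) : IntervalIntegrable g volume a b :=
  int_g_pi.mono_set h

lemma cos_zero_ae : ∀ᵐ t : ℝ, Real.cos t ≠ 0 := by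
  have hc : Set.Countable {t : ℝ | Real.cos t = 0} := by
    have : {t : ℝ | Real.cos t = 0} ⊆ Set.range (fun n : ℤ => (2*n+1) * π / 2) := by
      intro t ht
      rw [Set.mem_setOf_eq, Real.cos_eq_zero_iff] at ht
      obtain ⟨n, hn⟩ := ht
      exact ⟨n, hn.symm⟩
    exact Set.Countable.mono this (Set.countable_range _)
  have := hc.measure_zero (volume : MeasureTheory.Measure ℝ)
  have h2 := MeasureTheory.measure_eq_zero_iff_ae_notMem.mp this
  filter_upwards [h2] with t ht
  simpa using ht

lemma g_pi_sub (x : ℝ) : g (π - x) = g x := by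
  unfold g; rw [Real.sin_pi_sub]

noncomputable def lob' (θ : ℝ) : ℝ := -∫ t in (0:ℝ)..θ, g t

lemma refl_lob {θ : ℝ} (h0 : 0 ≤ θ) (h1 : θ ≤ π) : lob' (π - θ) + lob' θ = lob' π := by
  have hpi := pi_pos
  have i1 : IntervalIntegrable g volume 0 (π - θ) := by
    apply int_g_sub
    rw [Set.uIcc_of_le (by linarith), Set.uIcc_of_le hpi.le]
    exact Set.Icc_subset_Icc (le_refl _) (by linarith)
  have i2 : IntervalIntegrable g volume (π - θ) π := by
    apply int_g_sub
    rw [Set.uIcc_of_le (by linarith), Set.uIcc_of_le hpi.le]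
    exact Set.Icc_subset_Icc (by linarith) (le_refl _)
  have hadd := intervalIntegral.integral_add_adjacent_intervals i1 i2
  have hsub : (∫ t in (π - θ)..π, g t) = ∫ t in (0:ℝ)..θ, g t := by
    have := intervalIntegral.integral_comp_sub_left (a := 0) (b := θ) g π
    simp only [sub_zero] at this
    rw [← this]
    apply intervalIntegral.integral_congr
    intro x _
    exact g_pi_sub x
  unfold lob'
  rw [← hadd, hsub]
  ring

lemma lob_pi_half : lob' (π/2) = 0 ∧ lob' π = 0 := by
  have hpi := pi_pos
  have hdup : ∫ t in (0:ℝ)..(π/2), g (2*t) = (2:ℝ)⁻¹ • ∫ t in (0:ℝ)..π, g t := by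
    have h := intervalIntegral.integral_comp_mul_left (a := 0) (b := π/2) g (c := 2) two_ne_zero
    rw [mul_zero, show (2:ℝ)*(π/2) = π by ring] at h
    exact h
  have hae : ∫ t in (0:ℝ)..(π/2), g (2*t) = ∫ t in (0:ℝ)..(π/2), (g t + g (π/2 - t)) := by
    apply intervalIntegral.integral_congr_ae
    filter_upwards [sin_zero_ae, cos_zero_ae] with t hs hc _
    unfold g
    have h1 : Real.sin (2*t) = Real.sin t * Real.cos t * 2 := by
      rw [Real.sin_two_mul]; ring
    have h2 : Real.sin (π/2 - t) = Real.cos t := Real.sin_pi_div_two_sub t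
    rw [h1, h2]
    rw [show |2 * (Real.sin t * Real.cos t * 2)| = |2*Real.sin t| * |2*Real.cos t| by
      rw [← abs_mul]; ring_nf]
    rw [Real.log_mul (by simpa using hs) (by simpa using hc)]
  have ig : IntervalIntegrable g volume 0 (π/2) := by
    apply int_g_sub
    rw [Set.uIcc_of_le (by linarith), Set.uIcc_of_le hpi.le]
    exact Set.Icc_subset_Icc (le_refl _) (by linarith)
  have ig2 : IntervalIntegrable (fun t => g (π/2 - t)) volume 0 (π/2) := by
    have := (ig.comp_sub_left (π/2)).symm
    simpa using this
  have hsplit : ∫ t in (0:ℝ)..(π/2), (g t + g (π/2 - t)) =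
      (∫ t in (0:ℝ)..(π/2), g t) + ∫ t in (0:ℝ)..(π/2), g (π/2 - t) :=
    intervalIntegral.integral_add ig ig2
  have hrefl2 : ∫ t in (0:ℝ)..(π/2), g (π/2 - t) = ∫ t in (0:ℝ)..(π/2), g t := by
    have := intervalIntegral.integral_comp_sub_left (a := 0) (b := π/2) g (π/2)
    simpa using this
  have key : (2:ℝ)⁻¹ * (∫ t in (0:ℝ)..π, g t) = 2 * ∫ t in (0:ℝ)..(π/2), g t := by
    rw [smul_eq_mul] at hdup
    rw [← hdup, hae, hsplit, hrefl2]; ring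
  have hr := refl_lob (θ := π/2) (by linarith) (by linarith)
  rw [show π - π/2 = π/2 by ring] at hr
  unfold lob' at hr ⊢
  constructor <;> nlinarith [key, hr]

lemma lob_hasDeriv {θ : ℝ} (h0 : 0 < θ) (h1 : θ < π) :
    HasDerivAt lob' (-Real.log (2 * Real.sin θ)) θ := by
  have hint : IntervalIntegrable g volume 0 θ := by
    apply int_g_sub
    rw [Set.uIcc_of_le h0.le, Set.uIcc_of_le pi_pos.le]
    exact Set.Icc_subset_Icc (le_refl _) h1.le
  have hsin : 0 < Real.sin θ := Real.sin_pos_of_pos_of_lt_pi h0 h1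
  have hne : |2 * Real.sin θ| ≠ 0 := by positivity
  have hcont : ContinuousAt g θ := by
    unfold g
    have h1 : ContinuousAt (fun t : ℝ => |2 * Real.sin t|) θ :=
      ((continuous_const.mul Real.continuous_sin).abs).continuousAt
    exact h1.log hne
  have hd := intervalIntegral.integral_hasDerivAt_right hint
    (meas_g.stronglyMeasurable.stronglyMeasurableAtFilter) hcont
  have := hd.neg
  have hval : g θ = Real.log (2 * Real.sin θ) := by
    unfold g; rw [abs_of_pos (by positivity)]
  rw [hval] at this
  exact this

noncomputable def F (x y : ℝ) : ℝ := -2 * lob' (x + y) + 2 * lob' y + lob' x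

lemma F_hasDeriv_y {x : ℝ} (hx : 0 < x) (hxπ : x < π) :
    ∀ z ∈ Ioo (0:ℝ) (π - x), HasDerivAt (fun y => F x y)
      (2 * Real.log (2 * Real.sin (x + z)) - 2 * Real.log (2 * Real.sin z)) z := by
  intro z hz
  have hz0 := hz.1
  have hzπ : z < π := by have := hz.2; linarith
  have hxz0 : 0 < x + z := by linarith
  have hxzπ : x + z < π := by have := hz.2; linarith
  have inner : HasDerivAt (fun y : ℝ => x + y) 1 z := by
    simpa using (hasDerivAt_id z).const_add x
  have h1 := ((lob_hasDeriv hxz0 hxzπ).comp z inner).const_mul (-2 : ℝ)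
  have h2 := (lob_hasDeriv hz0 hzπ).const_mul (2 : ℝ)
  have h3 : HasDerivAt (fun _ : ℝ => lob' x) 0 z := hasDerivAt_const _ _
  have h := (h1.add h2).add h3
  refine h.congr_deriv ?_
  ring

lemma stepA {x y : ℝ} (hx : 0 < x) (hy : 0 < y) (hxy : x + y < π) :
    F x y ≤ F x ((π - x) / 2) := by
  have hxπ : x < π := by linarith
  set y0 := (π - x) / 2 with hy0
  have hy00 : 0 < y0 := by simp [hy0]; linarith
  have hy0π : y0 < π - x := by simp [hy0]; linarith
  have hyπ : y < π - x := by linarith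
  have hder := F_hasDeriv_y hx hxπ
  rcases le_or_gt y y0 with hc | hc
  · rcases eq_or_lt_of_le hc with he | hlt
    · rw [he]
    · have hsub : Icc y y0 ⊆ Ioo 0 (π - x) := fun z hz => ⟨lt_of_lt_of_le hy hz.1,
        lt_of_le_of_lt hz.2 hy0π⟩
      have hmono : StrictMonoOn (fun y' => F x y') (Icc y y0) := by
        apply strictMonoOn_of_deriv_pos (convex_Icc y y0)
        · exact fun z hz => ((hder z (hsub hz)).continuousAt).continuousWithinAt
        · intro z hz
          rw [interior_Icc] at hz
          have hz' : z ∈ Ioo (0:ℝ) (π - x) := hsub ⟨hz.1.le, hz.2.le⟩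
          rw [(hder z hz').deriv]
          have hzy0 : z < y0 := hz.2
          have hsinz : 0 < Real.sin z := Real.sin_pos_of_pos_of_lt_pi hz'.1 (by linarith [hz'.2])
          have hkey : Real.sin z < Real.sin (x + z) := by
            have hss := Real.sin_sub_sin (x + z) z
            rw [show (x + z - z)/2 = x/2 by ring, show (x + z + z)/2 = z + x/2 by ring] at hss
            have hs1 : 0 < Real.sin (x/2) :=
              Real.sin_pos_of_pos_of_lt_pi (by linarith) (by linarith)
            have hs2 : 0 < Real.cos (z + x/2) := by
              apply Real.cos_pos_of_mem_Ioo
              constructor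
              · have := pi_pos; linarith [hz'.1]
              · simp only [hy0] at hzy0; linarith
            nlinarith
          have := Real.log_lt_log (by linarith : (0:ℝ) < 2 * Real.sin z)
            (by linarith : 2 * Real.sin z < 2 * Real.sin (x + z))
          linarith
      exact (hmono ⟨le_refl y, hc⟩ ⟨hc, le_refl y0⟩ hlt).le
  · have hsub : Icc y0 y ⊆ Ioo 0 (π - x) := fun z hz =>
      ⟨lt_of_lt_of_le hy00 hz.1, lt_of_le_of_lt hz.2 hyπ⟩
    have hanti : StrictAntiOn (fun y' => F x y') (Icc y0 y) := by
      apply strictAntiOn_of_deriv_neg (convex_Icc y0 y)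
      · exact fun z hz => ((hder z (hsub hz)).continuousAt).continuousWithinAt
      · intro z hz
        rw [interior_Icc] at hz
        have hz' : z ∈ Ioo (0:ℝ) (π - x) := hsub ⟨hz.1.le, hz.2.le⟩
        rw [(hder z hz').deriv]
        have hzy0 : y0 < z := hz.1
        have hsinxz : 0 < Real.sin (x + z) :=
          Real.sin_pos_of_pos_of_lt_pi (by linarith [hz'.1]) (by linarith [hz'.2])
        have hkey : Real.sin (x + z) < Real.sin z := by
          have hss := Real.sin_sub_sin (x + z) z
          rw [show (x + z - z)/2 = x/2 by ring, show (x + z + z)/2 = z + x/2 by ring] at hss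
          have hs1 : 0 < Real.sin (x/2) :=
            Real.sin_pos_of_pos_of_lt_pi (by linarith) (by linarith)
          have hs2 : Real.cos (z + x/2) < 0 := by
            apply Real.cos_neg_of_pi_div_two_lt_of_lt
            · simp only [hy0] at hzy0; linarith
            · have := hz'.2; linarith
          nlinarith
        have := Real.log_lt_log (by linarith : (0:ℝ) < 2 * Real.sin (x + z))
          (by linarith : 2 * Real.sin (x + z) < 2 * Real.sin z)
        linarith
    exact (hanti ⟨le_refl y0, hc.le⟩ ⟨hc.le, le_refl y⟩ hc).le

noncomputable def G (x : ℝ) : ℝ := -2 * lob' ((π + x) / 2) + 2 * lob' ((π - x) / 2) + lob' x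

lemma G_eq_F (x : ℝ) : G x = F x ((π - x) / 2) := by
  unfold G F
  rw [show x + (π - x)/2 = (π + x)/2 by ring]

lemma G_hasDeriv : ∀ z ∈ Ioo (0:ℝ) π, HasDerivAt G
    (2 * Real.log (2 * Real.cos (z / 2)) - Real.log (2 * Real.sin z)) z := by
  intro z hz
  have hz0 := hz.1
  have hzπ := hz.2
  have hpi := pi_pos
  have ha0 : 0 < (π + z)/2 := by linarith
  have haπ : (π + z)/2 < π := by linarith
  have hb0 : 0 < (π - z)/2 := by linarith
  have hbπ : (π - z)/2 < π := by linarith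
  have inner1 : HasDerivAt (fun x : ℝ => (π + x) / 2) (1/2) z := by
    have := ((hasDerivAt_id z).const_add π).div_const 2
    simpa using this
  have inner2 : HasDerivAt (fun x : ℝ => (π - x) / 2) (-(1/2)) z := by
    have h := ((hasDerivAt_const z π).sub (hasDerivAt_id z)).div_const 2
    refine h.congr_deriv ?_
    norm_num
  have h1 := ((lob_hasDeriv ha0 haπ).comp z inner1).const_mul (-2 : ℝ)
  have h2 := ((lob_hasDeriv hb0 hbπ).comp z inner2).const_mul (2 : ℝ)
  have h3 := lob_hasDeriv hz0 hzπ
  have h := (h1.add h2).add h3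
  have hsinsym : Real.sin ((π + z)/2) = Real.sin ((π - z)/2) := by
    rw [show (π + z)/2 = π - (π - z)/2 by ring, Real.sin_pi_sub]
  have hcos : Real.sin ((π - z)/2) = Real.cos (z/2) := by
    rw [show (π - z)/2 = π/2 - z/2 by ring, Real.sin_pi_div_two_sub]
  refine h.congr_deriv ?_
  rw [hsinsym, hcos]
  ring

lemma stepB {x : ℝ} (hx : 0 < x) (hxπ : x < π) : G x ≤ G (π / 2) := by
  have hpi := pi_pos
  have key : ∀ z ∈ Ioo (0:ℝ) π,
      (z < π/2 → 0 < 2 * Real.log (2 * Real.cos (z / 2)) - Real.log (2 * Real.sin z)) ∧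
      (π/2 < z → 2 * Real.log (2 * Real.cos (z / 2)) - Real.log (2 * Real.sin z) < 0) := by
    intro z hz
    have hz0 := hz.1
    have hzπ := hz.2
    have hc0 : 0 < Real.cos (z/2) := by
      apply Real.cos_pos_of_mem_Ioo
      constructor <;> [linarith; linarith]
    have hs0 : 0 < Real.sin z := Real.sin_pos_of_pos_of_lt_pi hz0 hzπ
    have hsz2 : 0 < Real.sin (z/2) := Real.sin_pos_of_pos_of_lt_pi (by linarith) (by linarith)
    have hdouble : Real.sin z = 2 * Real.sin (z/2) * Real.cos (z/2) := by
      conv_lhs => rw [show z = 2 * (z/2) by ring]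
      rw [Real.sin_two_mul]
    have hlogsum : (2:ℝ) * Real.log (2 * Real.cos (z/2)) =
        Real.log ((2 * Real.cos (z/2)) * (2 * Real.cos (z/2))) := by
      have hne : (2 * Real.cos (z/2)) ≠ 0 := by positivity
      conv_rhs => rw [Real.log_mul hne hne]
      ring
    have hsin_eq_cos : Real.sin (z/2) = Real.cos (π/2 - z/2) := by
      rw [Real.cos_pi_div_two_sub]
    constructor
    · intro hhalf
      have hlt : Real.sin (z/2) < Real.cos (z/2) := by
        rw [hsin_eq_cos]
        apply Real.cos_lt_cos_of_nonneg_of_le_pi (by linarith) (by linarith) (by linarith)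
      have harg : 2 * Real.sin z < (2 * Real.cos (z/2)) * (2 * Real.cos (z/2)) := by
        rw [hdouble]; nlinarith
      have := Real.log_lt_log (by linarith) harg
      rw [← hlogsum] at this
      linarith
    · intro hhalf
      have hlt : Real.cos (z/2) < Real.sin (z/2) := by
        rw [hsin_eq_cos]
        apply Real.cos_lt_cos_of_nonneg_of_le_pi (by linarith) (by linarith) (by linarith)
      have harg : (2 * Real.cos (z/2)) * (2 * Real.cos (z/2)) < 2 * Real.sin z := by
        rw [hdouble]; nlinarith
      have := Real.log_lt_log (by positivity) harg
      rw [← hlogsum] at this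
      linarith
  rcases le_or_gt x (π/2) with hc | hc
  · rcases eq_or_lt_of_le hc with he | hlt
    · rw [he]
    · have hsub : Icc x (π/2) ⊆ Ioo 0 π := fun z hz =>
        ⟨lt_of_lt_of_le hx hz.1, lt_of_le_of_lt hz.2 (by linarith)⟩
      have hmono : StrictMonoOn G (Icc x (π/2)) := by
        apply strictMonoOn_of_deriv_pos (convex_Icc _ _)
        · exact fun z hz => ((G_hasDeriv z (hsub hz)).continuousAt).continuousWithinAt
        · intro z hz
          rw [interior_Icc] at hz
          have hz' := hsub ⟨hz.1.le, hz.2.le⟩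
          rw [(G_hasDeriv z hz').deriv]
          exact (key z hz').1 hz.2
      exact (hmono ⟨le_refl x, hc⟩ ⟨hc, le_refl _⟩ hlt).le
  · have hsub : Icc (π/2) x ⊆ Ioo 0 π := fun z hz =>
      ⟨lt_of_lt_of_le (by linarith) hz.1, lt_of_le_of_lt hz.2 hxπ⟩
    have hanti : StrictAntiOn G (Icc (π/2) x) := by
      apply strictAntiOn_of_deriv_neg (convex_Icc _ _)
      · exact fun z hz => ((G_hasDeriv z (hsub hz)).continuousAt).continuousWithinAt
      · intro z hz
        rw [interior_Icc] at hz
        have hz' := hsub ⟨hz.1.le, hz.2.le⟩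
        rw [(G_hasDeriv z hz').deriv]
        exact (key z hz').2 hz.1
    exact (hanti ⟨le_refl _, hc.le⟩ ⟨hc.le, le_refl x⟩ hc).le

lemma lob'_eq : lob' = lob := rfl

lemma F_eq_f (x y : ℝ) : F x y = f x y := by
  unfold F f
  rw [lob'_eq]

theorem max_value :
    (∀ x y : ℝ, 0 < x → 0 < y → x + y < π → f x y ≤ f (π / 2) (π / 4)) ∧
      f (π / 2) (π / 4) = 4 * lob (π / 4) := by
  constructor
  · intro x y hx hy hxy
    have hxπ : x < π := by linarith
    have h1 : f x y ≤ f x ((π - x) / 2) := by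
      rw [← F_eq_f, ← F_eq_f]
      exact stepA hx hy hxy
    have h2 : f x ((π - x) / 2) = G x := by rw [← F_eq_f, G_eq_F]
    have h3 : G (π / 2) = f (π / 2) (π / 4) := by
      rw [G_eq_F, F_eq_f, show (π - π / 2) / 2 = π / 4 by ring]
    have h4 := stepB hx hxπ
    linarith
  · obtain ⟨hhalf, hpival⟩ := lob_pi_half
    have h34 : lob' (3 * π / 4) = -lob' (π / 4) := by
      have hr := refl_lob (θ := π / 4) (by positivity) (by linarith [pi_pos])
      rw [show π - π / 4 = 3 * π / 4 by ring, hpival] at hr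
      linarith
    show -2 * lob (π / 2 + π / 4) + 2 * lob (π / 4) + lob (π / 2) = 4 * lob (π / 4)
    rw [← lob'_eq, show π / 2 + π / 4 = 3 * π / 4 by ring, h34, hhalf]
    ring
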